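/- Let g : ℝ → ℝ be continuous, strictly increasing with g(0) = 0, g(s)s > 0 for s ≠ 0. Then there exists a concave, strictly increasing function h : [0,∞) → [0,∞) with h(0) = 0 such that h(s·g(s)) ≥ s² + g(s)² for all |s| ≤ 1. -/

import Mathlib

/-- Existence of the Lasiecka–Tataru concave majorant: if `g` is continuous, strictly
increasing, `g(0) = 0` and `g(s)s > 0` for `s ≠ 0`, then there is a concave, strictly
increasing `h` on `[0, ∞)` with `h(0) = 0` such that `h(s g(s)) ≥ s² + g(s)²` for
all `|s| ≤ 1`. -/
theorem stmt_7 (g : ℝ → ℝ) (hcont : Continuous g) (hsm : StrictMono g)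
    (h0 : g 0 = 0) (hsign : ∀ s : ℝ, s ≠ 0 → g s * s > 0) :
    ∃ h : ℝ → ℝ, ConcaveOn ℝ (Set.Ici 0) h ∧ StrictMonoOn h (Set.Ici 0) ∧
      h 0 = 0 ∧ ∀ s : ℝ, |s| ≤ 1 → s ^ 2 + g s ^ 2 ≤ h (s * g s) := by
  have hmono := hsm.monotone
  set B : ℝ := 1 + g 1 ^ 2 + g (-1) ^ 2 with hBdef
  set m : ℝ → ℝ := fun u => min (u * g u) ((-u) * g (-u)) with hmdef
  set G : ℝ → ℝ := fun u => u ^ 2 + g u ^ 2 + g (-u) ^ 2 with hGdef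
  set L : ℝ → ℝ → ℝ := fun x u => (B / m u) * x + G u with hLdef
  set I : ℝ → ℝ := fun x => sInf ((L x) '' Set.Ioc 0 1) with hIdef
  have hBpos : (0:ℝ) < B := by positivity
  have hmpos : ∀ u ∈ Set.Ioc (0:ℝ) 1, 0 < m u := by
    rintro u ⟨hu0, _⟩
    have h1 := hsign u (ne_of_gt hu0)
    have h2 := hsign (-u) (by intro h; rw [neg_eq_zero] at h; exact (ne_of_gt hu0) h)
    exact lt_min (by nlinarith) (by nlinarith)
  have hdivnn : ∀ u ∈ Set.Ioc (0:ℝ) 1, 0 ≤ B / m u :=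
    fun u hu => le_of_lt (div_pos hBpos (hmpos u hu))
  have hGnn : ∀ u, 0 ≤ G u := fun u => by simp only [hGdef]; positivity
  have hLnn : ∀ x, 0 ≤ x → ∀ u ∈ Set.Ioc (0:ℝ) 1, 0 ≤ L x u := by
    intro x hx u hu
    exact add_nonneg (mul_nonneg (hdivnn u hu) hx) (hGnn u)
  have hne : ∀ x : ℝ, ((L x) '' Set.Ioc 0 1).Nonempty :=
    fun x => (Set.nonempty_Ioc.2 one_pos).image _
  have hbdd : ∀ x : ℝ, 0 ≤ x → BddBelow ((L x) '' Set.Ioc 0 1) := by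
    intro x hx
    exact ⟨0, by rintro b ⟨u, hu, rfl⟩; exact hLnn x hx u hu⟩
  have hInn : ∀ x : ℝ, 0 ≤ x → 0 ≤ I x := by
    intro x hx
    exact le_csInf (hne x) (by rintro b ⟨u, hu, rfl⟩; exact hLnn x hx u hu)
  have hImono : ∀ x y : ℝ, 0 ≤ x → x ≤ y → I x ≤ I y := by
    intro x y hx hxy
    refine le_csInf (hne y) ?_
    rintro b ⟨u, hu, rfl⟩
    calc I x ≤ L x u := csInf_le (hbdd x hx) ⟨u, hu, rfl⟩
      _ ≤ L y u := add_le_add_left (mul_le_mul_of_nonneg_left hxy (hdivnn u hu)) _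
  -- square bound
  have hsq : ∀ s u : ℝ, -u ≤ s → s ≤ u → g s ^ 2 ≤ g u ^ 2 + g (-u) ^ 2 := by
    intro s u h1 h2
    have ha : g (-u) ≤ g s := hmono h1
    have hb : g s ≤ g u := hmono h2
    rcases le_total 0 (g s) with h | h
    · nlinarith [sq_nonneg (g (-u))]
    · nlinarith [sq_nonneg (g u)]
  have hsgnn : ∀ s : ℝ, 0 ≤ s * g s := by
    intro s
    rcases eq_or_ne s 0 with rfl | h
    · simp
    · have := hsign s h; nlinarith
  -- key inequality
  have hkey : ∀ s : ℝ, |s| ≤ 1 → ∀ u ∈ Set.Ioc (0:ℝ) 1, s ^ 2 + g s ^ 2 ≤ L (s * g s) u := by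
    intro s hs u hu
    obtain ⟨hs1, hs2⟩ := abs_le.1 hs
    obtain ⟨hu0, hu1⟩ := hu
    rcases le_or_gt (|s|) u with hcase | hcase
    · -- |s| ≤ u : the constant term G u dominates
      obtain ⟨h1, h2⟩ := abs_le.1 hcase
      have hs2u : s ^ 2 ≤ u ^ 2 := sq_le_sq' h1 h2
      have hg2u : g s ^ 2 ≤ g u ^ 2 + g (-u) ^ 2 := hsq s u h1 h2
      have : 0 ≤ (B / m u) * (s * g s) := mul_nonneg (hdivnn u ⟨hu0, hu1⟩) (hsgnn s)
      simp only [hLdef, hGdef]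
      nlinarith
    · -- u < |s| : the linear term dominates, since s * g s ≥ m u
      have hmle : m u ≤ s * g s := by
        rcases lt_or_ge 0 s with hspos | hsneg
        · have hus : u ≤ s := by
            rcases abs_cases s with ⟨h, _⟩ | ⟨h, _⟩
            · linarith [hcase, h.symm ▸ hcase]
            · linarith
          have hgu : 0 ≤ g u := by rw [← h0]; exact hmono (le_of_lt hu0)
          calc m u ≤ u * g u := min_le_left _ _
            _ ≤ s * g u := mul_le_mul_of_nonneg_right hus hgu
            _ ≤ s * g s := mul_le_mul_of_nonneg_left (hmono hus) (le_of_lt hspos)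
        · have hsneg' : s < 0 := by
            rcases eq_or_lt_of_le hsneg with h | h
            · exfalso; rw [h] at hcase; simp at hcase; linarith
            · exact h
          have hus : u ≤ -s := by
            rw [abs_of_neg hsneg'] at hcase; linarith
          have hgmu : 0 ≤ -g (-u) := by
            have : g (-u) ≤ g 0 := hmono (by linarith)
            rw [h0] at this; linarith
          have hgs : -g (-u) ≤ -g s := by
            have : g s ≤ g (-u) := hmono (by linarith)
            linarith
          have : (-u) * g (-u) ≤ s * g s := by
            have h1 : u * (-g (-u)) ≤ (-s) * (-g s) := by
              apply mul_le_mul hus hgs hgmu (by linarith)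
            nlinarith
          calc m u ≤ (-u) * g (-u) := min_le_right _ _
            _ ≤ s * g s := this
      have hB_mu : B ≤ (B / m u) * (s * g s) := by
        have hmu := hmpos u ⟨hu0, hu1⟩
        have : (B / m u) * m u ≤ (B / m u) * (s * g s) :=
          mul_le_mul_of_nonneg_left hmle (hdivnn u ⟨hu0, hu1⟩)
        rwa [div_mul_cancel₀ B (ne_of_gt hmu)] at this
      have hsB : s ^ 2 + g s ^ 2 ≤ B := by
        have h1 : s ^ 2 ≤ 1 := by nlinarith
        have h2 : g s ^ 2 ≤ g 1 ^ 2 + g (-1) ^ 2 := hsq s 1 hs1 hs2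
        simp only [hBdef]; linarith
      calc s ^ 2 + g s ^ 2 ≤ B := hsB
        _ ≤ B / m u * (s * g s) := hB_mu
        _ ≤ B / m u * (s * g s) + G u := le_add_of_nonneg_right (hGnn u)
        _ = L (s * g s) u := rfl
  -- I 0 = 0
  have hI0 : I 0 = 0 := by
    refine le_antisymm ?_ (hInn 0 le_rfl)
    rw [Real.sInf_le_iff (hbdd 0 le_rfl) (hne 0)]
    intro ε hε
    have hGcont : Continuous G := by
      simp only [hGdef]
      exact ((continuous_pow 2).add ((hcont.pow 2))).add ((hcont.comp continuous_neg).pow 2)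
    have hG0 : G 0 = 0 := by simp [hGdef, h0]
    have := hGcont.continuousAt (x := 0)
    rw [Metric.continuousAt_iff] at this
    obtain ⟨δ, hδ, hδ'⟩ := this ε hε
    set u : ℝ := min (δ / 2) 1 with hudef
    have hu : u ∈ Set.Ioc (0:ℝ) 1 := ⟨lt_min (by linarith) one_pos, min_le_right _ _⟩
    refine ⟨L 0 u, ⟨u, hu, rfl⟩, ?_⟩
    have hdu : dist u 0 < δ := by
      rw [Real.dist_eq, sub_zero, abs_of_pos hu.1]
      calc u ≤ δ / 2 := min_le_left _ _
        _ < δ := by linarith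
    have := hδ' hdu
    rw [Real.dist_eq, hG0, sub_zero, abs_of_nonneg (hGnn u)] at this
    simp only [hLdef, mul_zero, zero_add]
    linarith
  refine ⟨fun x => x + I x, ⟨convex_Ici 0, ?_⟩, ?_, ?_, ?_⟩
  · -- concavity
    intro x hx y hy a b ha hb hab
    simp only [smul_eq_mul]
    have hxy : (0:ℝ) ≤ a * x + b * y :=
      add_nonneg (mul_nonneg ha hx) (mul_nonneg hb hy)
    have hIconc : a * I x + b * I y ≤ I (a * x + b * y) := by
      refine le_csInf (hne _) ?_
      rintro c ⟨u, hu, rfl⟩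
      have h1 : I x ≤ L x u := csInf_le (hbdd x hx) ⟨u, hu, rfl⟩
      have h2 : I y ≤ L y u := csInf_le (hbdd y hy) ⟨u, hu, rfl⟩
      have h1' : a * I x ≤ a * L x u := mul_le_mul_of_nonneg_left h1 ha
      have h2' : b * I y ≤ b * L y u := mul_le_mul_of_nonneg_left h2 hb
      have hexp : a * L x u + b * L y u = L (a * x + b * y) u := by
        simp only [hLdef]; ring_nf; nlinarith [hab]
      linarith
    nlinarith [hab]
  · -- strict mono
    intro x hx y hy hxy
    simp only [Set.mem_Ici] at hx hy
    have := hImono x y hx (le_of_lt hxy)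
    simp only []
    linarith
  · simp [hI0]
  · intro s hs
    have hx := hsgnn s
    have : s ^ 2 + g s ^ 2 ≤ I (s * g s) :=
      le_csInf (hne _) (by rintro c ⟨u, hu, rfl⟩; exact hkey s hs u hu)
    simp only []
    linarith
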